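/- Suppose c < 0. If ∫_0^1 D(u)f(u) du < 0, then there is no monotone C¹ profile φ with (D(φ)φ')' + cφ' + f(φ) = 0 on ℝ, 0 ≤ φ ≤ 1, lim_{ξ→−∞} φ(ξ) = 0, lim_{ξ→+∞} φ(ξ) = 1, D(φ)φ' → 0 at ±∞ and ∫_ℝ D(φ)φ'² dξ finite; if ∫_0^1 D(u)f(u) du > 0, then there is no such monotone profile with lim_{ξ→−∞} φ(ξ) = 1 and lim_{ξ→+∞} φ(ξ) = 0. -/

import Mathlib

open MeasureTheory Filter Topology Asymptotics

noncomputable section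

/-- Bistable (Nagumo) reaction-diffusion data: a degenerate diffusion coefficient `D`
(`D(0)=0`, `D>0` on `(0,1]`, `D'>0` on `[0,1]`, `D` of class `C²`) and a bistable
reaction `f` of Nagumo type with zeros `0, α, 1`. -/
structure NagumoSetup : Type where
  D : ℝ → ℝ
  f : ℝ → ℝ
  α : ℝ
  hα : α ∈ Set.Ioo (0:ℝ) 1
  hD_C2 : ContDiff ℝ 2 D
  hD0 : D 0 = 0
  hD_pos : ∀ u ∈ Set.Ioc (0:ℝ) 1, 0 < D u
  hD'_pos : ∀ u ∈ Set.Icc (0:ℝ) 1, 0 < deriv D u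
  hf_C2 : ContDiff ℝ 2 f
  hf0 : f 0 = 0
  hfα : f α = 0
  hf1 : f 1 = 0
  hf'0 : deriv f 0 < 0
  hf'1 : deriv f 1 < 0
  hf'α : 0 < deriv f α
  hf_pos : ∀ u ∈ Set.Ioo α 1, 0 < f u
  hf_neg : ∀ u ∈ Set.Ioo (0:ℝ) α, f u < 0

/-- A `C¹` traveling-wave profile with speed `c` for `u_t = (D(u)u_x)_x + f(u)`:
it satisfies `(D(φ)φ')' + cφ' + f(φ) = 0` on `ℝ`, takes values in `[0,1]`,
the flux `D(φ)φ'` is differentiable and tends to `0` at `±∞`, and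
`∫_ℝ D(φ)φ'² dξ` is finite. -/
structure TWProfile (S : NagumoSetup) (φ : ℝ → ℝ) (c : ℝ) : Prop where
  hC1 : ContDiff ℝ 1 φ
  hrange : ∀ x, φ x ∈ Set.Icc (0:ℝ) 1
  hflux : Differentiable ℝ fun x => S.D (φ x) * deriv φ x
  hode : ∀ x, deriv (fun y => S.D (φ y) * deriv φ y) x + c * deriv φ x + S.f (φ x) = 0
  hflux_bot : Tendsto (fun x => S.D (φ x) * deriv φ x) atBot (𝓝 0)
  hflux_top : Tendsto (fun x => S.D (φ x) * deriv φ x) atTop (𝓝 0)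
  hint : Integrable fun x => S.D (φ x) * (deriv φ x) ^ 2

lemma key_identity (S : NagumoSetup) (c : ℝ) (φ : ℝ → ℝ) (h : TWProfile S φ c)
    (a b : ℝ) (hbot : Tendsto φ atBot (𝓝 a)) (htop : Tendsto φ atTop (𝓝 b)) :
    (-c) * (∫ x, S.D (φ x) * (deriv φ x) ^ 2) =
      (∫ u in (0:ℝ)..b, S.D u * S.f u) - ∫ u in (0:ℝ)..a, S.D u * S.f u := by
  set g : ℝ → ℝ := fun x => S.D (φ x) * deriv φ x with hg_def
  set G : ℝ → ℝ := fun u => ∫ s in (0:ℝ)..u, S.D s * S.f s with hG_def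
  have hDf : Continuous fun u => S.D u * S.f u :=
    (S.hD_C2.continuous).mul (S.hf_C2.continuous)
  have hG : ∀ u, HasDerivAt G (S.D u * S.f u) u := fun u =>
    (hDf.integral_hasStrictDerivAt 0 u).hasDerivAt
  set E : ℝ → ℝ := fun x => (1/2) * (g x * g x) + G (φ x) with hE_def
  have hφd : ∀ x, HasDerivAt φ (deriv φ x) x := fun x =>
    ((h.hC1.differentiable one_ne_zero) x).hasDerivAt
  have hgd : ∀ x, HasDerivAt g (-(c * deriv φ x + S.f (φ x))) x := by
    intro x
    have := (h.hflux x).hasDerivAt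
    have hode := h.hode x
    have : deriv g x = -(c * deriv φ x + S.f (φ x)) := by
      simp only [hg_def]; linarith
    simpa [this] using (h.hflux x).hasDerivAt.congr_deriv this
  have hE : ∀ x, HasDerivAt E ((-c) * (S.D (φ x) * (deriv φ x) ^ 2)) x := by
    intro x
    have h1 : HasDerivAt (fun x => (1/2) * (g x * g x))
        ((1/2) * (-(c * deriv φ x + S.f (φ x)) * g x + g x * -(c * deriv φ x + S.f (φ x)))) x :=
      ((hgd x).mul (hgd x)).const_mul (1/2)
    have h2 : HasDerivAt (fun x => G (φ x)) (S.D (φ x) * S.f (φ x) * deriv φ x) x :=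
      (hG (φ x)).comp x (hφd x)
    have := h1.add h2
    refine HasDerivAt.congr_deriv this ?_
    simp only [hg_def]; ring
  have hint' : Integrable fun x => (-c) * (S.D (φ x) * (deriv φ x) ^ 2) :=
    h.hint.const_mul (-c)
  have hGcont : Continuous G := by
    apply continuous_iff_continuousAt.2
    exact fun u => (hG u).continuousAt
  have hsq_bot : Tendsto (fun x => (1/2) * (g x * g x)) atBot (𝓝 0) := by
    have := (h.hflux_bot.mul h.hflux_bot).const_mul (1/2)
    simpa using this
  have hsq_top : Tendsto (fun x => (1/2) * (g x * g x)) atTop (𝓝 0) := by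
    have := (h.hflux_top.mul h.hflux_top).const_mul (1/2)
    simpa using this
  have hE_bot : Tendsto E atBot (𝓝 (G a)) := by
    have := hsq_bot.add ((hGcont.tendsto a).comp hbot)
    simpa [hE_def, one_div] using this
  have hE_top : Tendsto E atTop (𝓝 (G b)) := by
    have := hsq_top.add ((hGcont.tendsto b).comp htop)
    simpa [hE_def, one_div] using this
  have := MeasureTheory.integral_of_hasDerivAt_of_tendsto hE hint' hE_bot hE_top
  rw [MeasureTheory.integral_const_mul] at this
  exact this


/-- Nonexistence of monotone fronts with negative speed: if `c < 0` and `∫₀¹ Df < 0`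
there is no monotone front from `0` to `1`; if `c < 0` and `∫₀¹ Df > 0` there is no
monotone front from `1` to `0`. -/
theorem statement2 (S : NagumoSetup) (c : ℝ) (hc : c < 0) :
    ((∫ u in (0:ℝ)..1, S.D u * S.f u) < 0 →
      ¬ ∃ φ : ℝ → ℝ, TWProfile S φ c ∧ Monotone φ ∧
        Tendsto φ atBot (𝓝 0) ∧ Tendsto φ atTop (𝓝 1)) ∧
    ((0 : ℝ) < (∫ u in (0:ℝ)..1, S.D u * S.f u) →
      ¬ ∃ φ : ℝ → ℝ, TWProfile S φ c ∧ Antitone φ ∧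
        Tendsto φ atBot (𝓝 1) ∧ Tendsto φ atTop (𝓝 0)) := by

  have hI : ∀ φ : ℝ → ℝ, TWProfile S φ c →
      0 ≤ ∫ x, S.D (φ x) * (deriv φ x) ^ 2 := by
    intro φ h
    apply integral_nonneg
    intro x
    have hr := h.hrange x
    have hD : 0 ≤ S.D (φ x) := by
      rcases eq_or_lt_of_le hr.1 with h0 | h0
      · rw [← h0, S.hD0]
      · exact le_of_lt (S.hD_pos _ ⟨h0, hr.2⟩)
    positivity
  constructor
  · rintro hneg ⟨φ, h, -, hbot, htop⟩
    have := key_identity S c φ h 0 1 hbot htop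
    simp only [intervalIntegral.integral_same] at this
    nlinarith [hI φ h]
  · rintro hpos ⟨φ, h, -, hbot, htop⟩
    have := key_identity S c φ h 1 0 hbot htop
    simp only [intervalIntegral.integral_same] at this
    nlinarith [hI φ h]
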